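/- Consider the set A = {a_1, ..., a_n} of positive integers with sum s, and the RMCMD instance with disks d_1 of radius 2s centered at the origin, d_2 of radius 2s centered at (3s, 0), d_3 of radius s centered at (0, 5s/2 + e), d_4 of radius s centered at (3s, 5s/2 + e) for some 0 < e < 1, and for each a_i a disk of radius a_i centered at (3s/2, 0). If A has a subset X with sum s/2, then assigning each disk corresponding to a member of X to d_1 and each remaining small disk to d_2 yields an assignment in which d_1, d_2, d_3, d_4 are selected, the aggregate radii of d_1 and d_2 are both 5s/2, and no selected disk contains the center of another selected disk (with respect to aggregate radii). -/

import Mathlib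

open scoped Classical

noncomputable section

/-- Points of the plane. -/
abbrev Pt := EuclideanSpace ℝ (Fin 2)

/-- The aggregate radius of a disk `i` under an assignment `φ`:
the sum of the radii of all disks assigned to `i`. -/
def aggRadius {α : Type*} [Fintype α] (r : α → ℝ) (φ : α → α) (i : α) : ℝ :=
  ∑ j ∈ Finset.univ.filter (fun j => φ j = i), r j

/-- Partition-to-RMCMD construction, forward direction.  Given positive reals
`a_1, …, a_n` with sum `s`, the RMCMD instance consists of `d_1` of radius `2s` at the
origin, `d_2` of radius `2s` at `(3s, 0)`, `d_3` of radius `s` at `(0, 5s/2 + e)`,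
`d_4` of radius `s` at `(3s, 5s/2 + e)` (with `0 < e < 1`), and for each `a_i` a small
disk of radius `a_i` at `(3s/2, 0)`.  If `X ⊆ A` has sum `s/2`, then assigning each
small disk with index in `X` to `d_1` and the rest to `d_2` (and fixing `d_1,…,d_4`)
yields an assignment in which `d_1, d_2, d_3, d_4` are selected, the aggregate radii
of `d_1` and `d_2` are both `5s/2`, and no selected disk contains the centre of
another selected disk with respect to aggregate radii. -/
theorem partition_to_RMCMD_forward {n : ℕ} (a : Fin n → ℝ) (ha : ∀ i, 0 < a i)
    (e : ℝ) (he0 : 0 < e) (he1 : e < 1) (X : Finset (Fin n))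
    (hX : ∑ i ∈ X, a i = (∑ i, a i) / 2) :
    let s : ℝ := ∑ i, a i
    let p : Fin 4 ⊕ Fin n → Pt := Sum.elim
      ![!₂[0, 0], !₂[3 * s, 0], !₂[0, 5 * s / 2 + e], !₂[3 * s, 5 * s / 2 + e]]
      (fun _ => !₂[3 * s / 2, 0])
    let r : Fin 4 ⊕ Fin n → ℝ := Sum.elim ![2 * s, 2 * s, s, s] a
    let φ : Fin 4 ⊕ Fin n → Fin 4 ⊕ Fin n := Sum.elim
      (fun k => Sum.inl k)
      (fun i => if i ∈ X then Sum.inl 0 else Sum.inl 1)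
    -- φ is an assignment
    (∀ d, φ (φ d) = φ d) ∧
    -- d_1, d_2, d_3, d_4 are selected
    (∀ k : Fin 4, φ (Sum.inl k) = Sum.inl k) ∧
    -- the aggregate radii of d_1 and d_2 are both 5s/2
    aggRadius r φ (Sum.inl 0) = 5 * s / 2 ∧
    aggRadius r φ (Sum.inl 1) = 5 * s / 2 ∧
    -- no selected disk contains the centre of another selected disk
    -- (with respect to aggregate radii)
    (∀ d d', φ d = d → φ d' = d' → d ≠ d' →
      aggRadius r φ d ≤ dist (p d) (p d')) := by
  intro s p r φ
  have hs : 0 ≤ s := Finset.sum_nonneg fun i _ => (ha i).le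
  have hXc : ∑ i ∈ Xᶜ, a i = s / 2 := by
    have := Finset.sum_add_sum_compl X a
    have hX' : ∑ i ∈ X, a i = s / 2 := hX
    linarith
  have hagg : ∀ t, aggRadius r φ t =
      (∑ k : Fin 4, if (Sum.inl k : Fin 4 ⊕ Fin n) = t then (![2*s,2*s,s,s]) k else 0) +
      ∑ i : Fin n, if ((if i ∈ X then Sum.inl 0 else Sum.inl 1) : Fin 4 ⊕ Fin n) = t
        then a i else 0 := by
    intro t
    rw [aggRadius, Finset.sum_filter, Fintype.sum_sum_type]
    simp only [φ, r, Sum.elim_inl, Sum.elim_inr]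
    congr 1 <;> exact Finset.sum_congr rfl fun _ _ => by congr
  have h0 : aggRadius r φ (Sum.inl 0) = 5 * s / 2 := by
    rw [hagg, Fin.sum_univ_four]
    have : (∑ i : Fin n, if ((if i ∈ X then Sum.inl 0 else Sum.inl 1) : Fin 4 ⊕ Fin n)
        = Sum.inl 0 then a i else 0) = ∑ i ∈ X, a i := by
      rw [← Finset.sum_filter]
      congr 1
      ext i
      by_cases hi : i ∈ X <;> simp [hi]
    rw [this, hX, show (∑ i, a i) = s from rfl]
    norm_num [Fin.ext_iff, show ((3:Fin 4):ℕ) = 3 from rfl, show ((2:Fin 4):ℕ) = 2 from rfl]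
    try ring
  have h1 : aggRadius r φ (Sum.inl 1) = 5 * s / 2 := by
    rw [hagg, Fin.sum_univ_four]
    have : (∑ i : Fin n, if ((if i ∈ X then Sum.inl 0 else Sum.inl 1) : Fin 4 ⊕ Fin n)
        = Sum.inl 1 then a i else 0) = ∑ i ∈ Xᶜ, a i := by
      rw [← Finset.sum_filter]
      congr 1
      ext i
      by_cases hi : i ∈ X <;> simp [hi]
    rw [this, hXc]
    norm_num [Fin.ext_iff, show ((3:Fin 4):ℕ) = 3 from rfl, show ((2:Fin 4):ℕ) = 2 from rfl]
    try ring
  have h2 : aggRadius r φ (Sum.inl 2) = s := by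
    rw [hagg, Fin.sum_univ_four]
    have : (∑ i : Fin n, if ((if i ∈ X then Sum.inl 0 else Sum.inl 1) : Fin 4 ⊕ Fin n)
        = Sum.inl 2 then a i else 0) = 0 := by
      apply Finset.sum_eq_zero
      intro i _
      by_cases hi : i ∈ X <;> simp [hi]
    rw [this]
    norm_num [Fin.ext_iff, show ((3:Fin 4):ℕ) = 3 from rfl, show ((2:Fin 4):ℕ) = 2 from rfl]
    try ring
    simp
  have h3 : aggRadius r φ (Sum.inl 3) = s := by
    rw [hagg, Fin.sum_univ_four]
    have : (∑ i : Fin n, if ((if i ∈ X then Sum.inl 0 else Sum.inl 1) : Fin 4 ⊕ Fin n)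
        = Sum.inl 3 then a i else 0) = 0 := by
      apply Finset.sum_eq_zero
      intro i _
      by_cases hi : i ∈ X <;> simp [hi]
    rw [this]
    norm_num [Fin.ext_iff, show ((3:Fin 4):ℕ) = 3 from rfl, show ((2:Fin 4):ℕ) = 2 from rfl]
    try ring
    simp
  have hcase : ∀ A B : ℝ, 0 ≤ B → A^2 ≤ B → 0 ≤ A → A ≤ Real.sqrt B := by
    intro A B hB h hA
    nlinarith [Real.sq_sqrt hB, Real.sqrt_nonneg B]
  have hcoord : ∀ (u v : Fin 4 ⊕ Fin n) (i : Fin 2),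
      dist (p u i) (p v i) ≤ dist (p u) (p v) := by
    intro u v i
    rw [show dist (p u) (p v) = Real.sqrt (∑ j, dist (p u j) (p v j) ^ 2) from
      EuclideanSpace.dist_eq (p u) (p v)]
    refine hcase _ _ (Finset.sum_nonneg fun j _ => by positivity) ?_ dist_nonneg
    exact Finset.single_le_sum (f := fun j => dist (p u j) (p v j) ^ 2)
      (fun j _ => by positivity) (Finset.mem_univ i)
  have habs1 : |5 * s / 2 + e| = 5 * s / 2 + e := abs_of_nonneg (by positivity)
  have habs2 : |s| = s := abs_of_nonneg hs
  refine ⟨?_, ?_, h0, h1, ?_⟩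
  · rintro (k | i)
    · rfl
    · simp only [φ, Sum.elim_inr]
      split_ifs <;> rfl
  · intro k; rfl
  · intro d d' hd hd' hne
    obtain (k | i) := d
    swap
    · exfalso
      simp only [φ, Sum.elim_inr] at hd
      split_ifs at hd <;> exact Sum.noConfusion hd
    obtain (k' | i') := d'
    swap
    · exfalso
      simp only [φ, Sum.elim_inr] at hd'
      split_ifs at hd' <;> exact Sum.noConfusion hd'
    fin_cases k <;> fin_cases k'
    all_goals try exact absurd rfl hne
    all_goals
      first
      | (refine le_trans ?_ (hcoord _ _ 0)
         simp [p, Sum.elim_inl, Fin.isValue, Fin.mk_zero, Fin.mk_one,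
           Matrix.cons_val_zero, Matrix.cons_val_one, Matrix.head_cons,
           Matrix.cons_val_two, Matrix.tail_cons, Matrix.cons_val_three,
           Real.dist_eq, habs1, habs2, h0, h1, h2, h3]
         first
         | linarith
         | (refine le_trans ?_ (le_abs_self _); linarith)
         | (refine le_trans ?_ (neg_le_abs _); linarith))
      | (refine le_trans ?_ (hcoord _ _ 1)
         simp [p, Sum.elim_inl, Fin.isValue, Fin.mk_zero, Fin.mk_one,
           Matrix.cons_val_zero, Matrix.cons_val_one, Matrix.head_cons,
           Matrix.cons_val_two, Matrix.tail_cons, Matrix.cons_val_three,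
           Real.dist_eq, habs1, habs2, h0, h1, h2, h3]
         first
         | linarith
         | (refine le_trans ?_ (le_abs_self _); linarith)
         | (refine le_trans ?_ (neg_le_abs _); linarith))

end
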